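/- arXiv:2407.07974 — 2 statements merged into one kernel-verified Lean document; each statement's English description precedes it below -/
import Mathlib

section
/- Let C be a regular, irreducible curve that is projective over a field k, with function field F = k(C), arithmetic genus t, and a k-rational point O. Let P ≠ O be a closed point with d = deg(P) ≥ t + 1, and let f_P have divisor (P) − D_P − (d − t)(O) with D_P effective of degree t. Suppose a^+ and a^− are nonzero elements of RR_{e^+} and RR_{e^−} respectively, for some e^+, e^− ≥ 0, with a^+(P) ≠ 0 and a^−(P) ≠ 0, and suppose there exist integers δ ≥ 0 and ε^+, ε^− ≤ d − 1 satisfying e^− + ε^+ ≤ 2d + δ − 1, e^+ + ε^− ≤ 2d + δ − 1, and ε^+ + ε^− ≥ d + δ + 2t − 1. Then there exist nonzero b^+ in RR_{ε^+}, nonzero b^− in RR_{ε^−}, and g in RR_{d+t−1}(D_P) with a^− b^+ − a^+ b^− = f_P g. -/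
open scoped TensorProduct

noncomputable section

/-- The set of Steinberg relations in `Fˣ ⊗_ℤ Fˣ` (written additively):
the elements `a ⊗ b` with `a + b = 1` in `F`. -/
def SteinbergSet (F : Type*) [Field F] :
    Set (TensorProduct ℤ (Additive Fˣ) (Additive Fˣ)) :=
  { x | ∃ a b : Fˣ, (a : F) + (b : F) = 1 ∧
      x = Additive.ofMul a ⊗ₜ[ℤ] Additive.ofMul b }

/-- Milnor's `K₂` of a field, via Matsumoto's presentation. -/
abbrev K2 (F : Type*) [Field F] :=
  (TensorProduct ℤ (Additive Fˣ) (Additive Fˣ)) ⧸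
    Submodule.span ℤ (SteinbergSet F)

/-- The symbol `{f, g}` in `K₂(F)`. -/
def symbol {F : Type*} [Field F] (f g : Fˣ) : K2 F :=
  Submodule.Quotient.mk (Additive.ofMul f ⊗ₜ[ℤ] Additive.ofMul g)

/-- The degree of a divisor `D` on the curve: `∑_P deg(P) · D(P)`,
where `deg P = [k(P) : k]`. -/
def divDeg (k : Type*) [Field k] {Pt : Type*} (res : Pt → Type*)
    [∀ P, Field (res P)] [∀ P, Algebra k (res P)] (D : Pt →₀ ℤ) : ℤ :=
  ∑ᶠ P, (Module.finrank k (res P) : ℤ) * D P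

/-- Axioms for a regular, irreducible curve `C`, projective over a field `k`, with
`H⁰(C, O_C) = k`, presented through: its function field `F = k(C)`, its set `Pt` of
closed points, the residue fields `res P = k(P)`, the normalized valuations `ord P`,
the evaluation maps `ev P` (evaluation at `P` of functions regular at `P`), the
Riemann-Roch spaces `L D = H⁰(C, O_C(D))`, and the arithmetic genus
`t = dim_k H¹(C, O_C)`, characterized by the Riemann-Roch relations. -/
structure IsProjCurve (k F : Type*) [Field k] [Field F] [Algebra k F]
    {Pt : Type*} (res : Pt → Type*) [∀ P, Field (res P)] [∀ P, Algebra k (res P)]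
    (ord : Pt → F → ℤ) (ev : ∀ P, F → res P)
    (L : (Pt →₀ ℤ) → Submodule k F) (t : ℕ) : Prop where
  finiteDimensional_res : ∀ P, FiniteDimensional k (res P)
  ord_mul : ∀ P (f g : F), f ≠ 0 → g ≠ 0 → ord P (f * g) = ord P f + ord P g
  ord_add : ∀ P (f g : F), f ≠ 0 → g ≠ 0 → f + g ≠ 0 →
      min (ord P f) (ord P g) ≤ ord P (f + g)
  ord_algebraMap : ∀ P (c : k), c ≠ 0 → ord P (algebraMap k F c) = 0
  ord_uniformizer : ∀ P, ∃ f : F, f ≠ 0 ∧ ord P f = 1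
  ord_separates : ∀ P Q, (∀ f : F, ord P f = ord Q f) → P = Q
  support_finite : ∀ f : F, f ≠ 0 → {P | ord P f ≠ 0}.Finite
  degree_formula : ∀ f : F, f ≠ 0 →
      ∑ᶠ P, (Module.finrank k (res P) : ℤ) * ord P f = 0
  ev_zero : ∀ P, ev P 0 = 0
  ev_one : ∀ P, ev P 1 = 1
  ev_add : ∀ P (f g : F), f ≠ 0 → g ≠ 0 → 0 ≤ ord P f → 0 ≤ ord P g →
      ev P (f + g) = ev P f + ev P g
  ev_mul : ∀ P (f g : F), f ≠ 0 → g ≠ 0 → 0 ≤ ord P f → 0 ≤ ord P g →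
      ev P (f * g) = ev P f * ev P g
  ev_algebraMap : ∀ P (c : k), ev P (algebraMap k F c) = algebraMap k (res P) c
  ev_eq_zero_iff : ∀ P (f : F), f ≠ 0 → 0 ≤ ord P f → (ev P f = 0 ↔ 0 < ord P f)
  ev_surjective : ∀ P (y : res P), ∃ f : F, f ≠ 0 ∧ 0 ≤ ord P f ∧ ev P f = y
  mem_L : ∀ (D : Pt →₀ ℤ) (f : F), f ∈ L D ↔ (f ≠ 0 → ∀ P, 0 ≤ D P + ord P f)
  finiteDimensional_L : ∀ D, FiniteDimensional k (L D)
  global_sections : ∀ f : F, f ∈ L 0 ↔ ∃ c : k, algebraMap k F c = f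
  rr_ineq : ∀ D : Pt →₀ ℤ,
      divDeg k res D + 1 - t ≤ (Module.finrank k (L D) : ℤ)
  rr_eq : ∀ D : Pt →₀ ℤ, 2 * (t : ℤ) - 2 < divDeg k res D →
      (Module.finrank k (L D) : ℤ) = divDeg k res D + 1 - t

/-- `T` is the tame symbol `K₂(F) → ∐_{P} k(P)^*`: it is determined by
`T_P({f,g}) = (-1)^{ord_P(f)·ord_P(g)} (f^{ord_P(g)} / g^{ord_P(f)})(P)`. -/
def IsTameSymbol {F : Type*} [Field F] {Pt : Type*} {res : Pt → Type*}
    [∀ P, Field (res P)]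
    (ord : Pt → F → ℤ) (ev : ∀ P, F → res P)
    (T : K2 F →+ Π₀ P : Pt, Additive ((res P)ˣ)) : Prop :=
  ∀ (f g : Fˣ) (P : Pt),
    ((Additive.toMul (T (symbol f g) P) : (res P)ˣ) : res P) =
      ev P (((-1 : Fˣ) ^ (ord P (f : F) * ord P (g : F)) *
        f ^ (ord P (g : F)) * g ^ (-ord P (f : F)) : Fˣ) : F)

section Helpers

variable {k : Type*} [Field k] {Pt : Type*} {res : Pt → Type*}
    [∀ P, Field (res P)] [∀ P, Algebra k (res P)]

lemma divDeg_support_finite (D : Pt →₀ ℤ) :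
    (Function.support fun Q => (Module.finrank k (res Q) : ℤ) * D Q).Finite := by
  apply D.finite_support.subset
  intro Q hQ
  simp only [Function.mem_support, ne_eq] at hQ ⊢
  intro h; exact hQ (by rw [h, mul_zero])

lemma divDeg_add (D1 D2 : Pt →₀ ℤ) :
    divDeg k res (D1 + D2) = divDeg k res D1 + divDeg k res D2 := by
  unfold divDeg
  have : ∀ Q, (Module.finrank k (res Q) : ℤ) * (D1 + D2) Q
      = (Module.finrank k (res Q) : ℤ) * D1 Q + (Module.finrank k (res Q) : ℤ) * D2 Q := by
    intro Q; rw [Finsupp.add_apply, mul_add]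
  rw [finsum_congr this, finsum_add_distrib (divDeg_support_finite D1)
    (divDeg_support_finite D2)]

lemma divDeg_neg (D : Pt →₀ ℤ) : divDeg k res (-D) = -divDeg k res D := by
  unfold divDeg
  have : ∀ Q, (Module.finrank k (res Q) : ℤ) * (-D) Q
      = -((Module.finrank k (res Q) : ℤ) * D Q) := by
    intro Q; rw [Finsupp.neg_apply, mul_neg]
  rw [finsum_congr this, finsum_neg_distrib]

lemma divDeg_sub (D1 D2 : Pt →₀ ℤ) :
    divDeg k res (D1 - D2) = divDeg k res D1 - divDeg k res D2 := by
  rw [sub_eq_add_neg, divDeg_add, divDeg_neg, sub_eq_add_neg]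

lemma divDeg_single (Q : Pt) (c : ℤ) :
    divDeg k res (Finsupp.single Q c) = (Module.finrank k (res Q) : ℤ) * c := by
  unfold divDeg
  rw [finsum_eq_single _ Q]
  · rw [Finsupp.single_eq_same]
  · intro R hR; rw [Finsupp.single_eq_of_ne' (Ne.symm hR), mul_zero]

variable {F : Type*} [Field F] [Algebra k F]
    {ord : Pt → F → ℤ} {ev : ∀ P, F → res P}
    {L : (Pt →₀ ℤ) → Submodule k F} {t : ℕ}

/-- A Riemann-Roch space of negative degree is zero. -/
lemma eq_zero_of_mem_L_neg_deg (hC : IsProjCurve k F res ord ev L t)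
    {D : Pt →₀ ℤ} (hD : divDeg k res D < 0) {f : F} (hf : f ∈ L D) : f = 0 := by
  by_contra hne
  have hord := (hC.mem_L D f).mp hf hne
  have hdeg := hC.degree_formula f hne
  have hfin : (Function.support fun Q => (Module.finrank k (res Q) : ℤ) * ord Q f).Finite := by
    apply (hC.support_finite f hne).subset
    intro Q hQ
    simp only [Function.mem_support, ne_eq] at hQ ⊢
    intro h; exact hQ (by rw [h, mul_zero])
  have key : 0 ≤ divDeg k res D := by
    have heq : divDeg k res D = ∑ᶠ Q, ((Module.finrank k (res Q) : ℤ) * D Q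
        + (Module.finrank k (res Q) : ℤ) * ord Q f) := by
      rw [finsum_add_distrib (divDeg_support_finite D) hfin]
      unfold divDeg
      rw [hdeg, add_zero]
    rw [heq]
    apply finsum_nonneg
    intro Q
    rw [← mul_add]
    exact mul_nonneg (by positivity) (hord Q)
  omega

end Helpers

/-- Lemma `abdlemma`.  Let `C` be a regular, irreducible curve,
projective over `k`, with function field `F`, arithmetic genus `t` and a `k`-rational
point `O`.  Let `P ≠ O` have `d = deg(P) ≥ t + 1` and let `f_P` have divisor
`(P) - D_P - (d - t)(O)` with `D_P` effective of degree `t`.  If `a⁺ ∈ RR_{e⁺}^*`,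
`a⁻ ∈ RR_{e⁻}^*` (for some `e⁺, e⁻ ≥ 0`) do not vanish at `P`, and there are integers
`δ ≥ 0` and `ε⁺, ε⁻ ≤ d - 1` with `e⁻ + ε⁺ ≤ 2d + δ - 1`, `e⁺ + ε⁻ ≤ 2d + δ - 1` and
`ε⁺ + ε⁻ ≥ d + δ + 2t - 1`, then there are `b⁺ ∈ RR_{ε⁺}^*`, `b⁻ ∈ RR_{ε⁻}^*` and
`g ∈ RR_{d+t-1}(D_P)` with `a⁻ b⁺ - a⁺ b⁻ = f_P g`. -/
theorem statement14 (k F : Type*) [Field k] [Field F] [Algebra k F]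
    {Pt : Type*} (res : Pt → Type*) [∀ P, Field (res P)] [∀ P, Algebra k (res P)]
    (ord : Pt → F → ℤ) (ev : ∀ P, F → res P)
    (L : (Pt →₀ ℤ) → Submodule k F) (t : ℕ)
    (hC : IsProjCurve k F res ord ev L t)
    (O : Pt) (hO : Module.finrank k (res O) = 1)
    (P : Pt) (hP : P ≠ O) (d : ℕ) (hd : d = Module.finrank k (res P))
    (hdt : t + 1 ≤ d)
    (fP : F) (hfP0 : fP ≠ 0) (DP : Pt →₀ ℤ)
    (hDPeff : ∀ Q, 0 ≤ DP Q) (hDPdeg : divDeg k res DP = t)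
    (hfP : ∀ Q, ord Q fP =
      ((Finsupp.single P 1 - DP - ((d : ℤ) - t) • Finsupp.single O 1 : Pt →₀ ℤ)) Q)
    (ep em : ℤ) (hep : 0 ≤ ep) (hem : 0 ≤ em)
    (ap am : F) (hap0 : ap ≠ 0) (ham0 : am ≠ 0)
    (hap : ap ∈ L (Finsupp.single O ep)) (ham : am ∈ L (Finsupp.single O em))
    (hapP : ev P ap ≠ 0) (hamP : ev P am ≠ 0)
    (δ εp εm : ℤ) (hδ : 0 ≤ δ) (hεp : εp ≤ (d : ℤ) - 1) (hεm : εm ≤ (d : ℤ) - 1)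
    (h1 : em + εp ≤ 2 * d + δ - 1) (h2 : ep + εm ≤ 2 * d + δ - 1)
    (h3 : (d : ℤ) + δ + 2 * t - 1 ≤ εp + εm) :
    ∃ bp bm g : F, bp ≠ 0 ∧ bm ≠ 0 ∧
      bp ∈ L (Finsupp.single O εp) ∧ bm ∈ L (Finsupp.single O εm) ∧
      g ∈ L (Finsupp.single O ((d : ℤ) + t - 1) - DP) ∧
      am * bp - ap * bm = fP * g := by
  have hdt' : (t : ℤ) + 1 ≤ (d : ℤ) := by exact_mod_cast hdt
  -- ord at P of ap, am is 0
  have ordP_nonneg : ∀ (a : F) (e : ℤ), a ≠ 0 → a ∈ L (Finsupp.single O e) →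
      0 ≤ ord P a := by
    intro a e ha hmem
    have := (hC.mem_L _ a).mp hmem ha P
    rwa [Finsupp.single_eq_of_ne' (Ne.symm hP), zero_add] at this
  have ordP_eq_zero : ∀ (a : F) (e : ℤ), a ≠ 0 → a ∈ L (Finsupp.single O e) →
      ev P a ≠ 0 → ord P a = 0 := by
    intro a e ha hmem hev
    have h0 := ordP_nonneg a e ha hmem
    have hlt : ¬ 0 < ord P a := fun hc => hev ((hC.ev_eq_zero_iff P a ha h0).mpr hc)
    omega
  have ordP_ap : ord P ap = 0 := ordP_eq_zero ap ep hap0 hap hapP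
  have ordP_am : ord P am = 0 := ordP_eq_zero am em ham0 ham hamP
  -- divisors
  set DE : Pt →₀ ℤ := Finsupp.single O (2 * (d : ℤ) + δ - 1) with hDEdef
  set DW : Pt →₀ ℤ := Finsupp.single O (2 * (d : ℤ) - 1) - Finsupp.single P 1 with hDWdef
  -- the product membership lemma
  have hmulE : ∀ (a b : F) (e ε : ℤ), a ∈ L (Finsupp.single O e) →
      b ∈ L (Finsupp.single O ε) → e + ε ≤ 2 * (d : ℤ) + δ - 1 → a * b ∈ L DE := by
    intro a b e ε hA hB hsum
    rw [hC.mem_L]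
    intro hne Q
    have ha : a ≠ 0 := left_ne_zero_of_mul hne
    have hb : b ≠ 0 := right_ne_zero_of_mul hne
    rw [hC.ord_mul Q a b ha hb]
    have hA' := (hC.mem_L _ a).mp hA ha Q
    have hB' := (hC.mem_L _ b).mp hB hb Q
    rw [hDEdef]
    by_cases hQ : Q = O
    · subst hQ
      rw [Finsupp.single_eq_same] at hA' hB' ⊢
      linarith
    · rw [Finsupp.single_eq_of_ne' (fun h => hQ h.symm)] at hA' hB' ⊢
      linarith
  -- membership of products in DW forces vanishing
  have hvanish : ∀ (a b : F) (ε : ℤ), a ≠ 0 → ord P a = 0 →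
      b ∈ L (Finsupp.single O ε) → ε ≤ (d : ℤ) - 1 → a * b ∈ L DW → b = 0 := by
    intro a b ε ha hordPa hb hε hmem
    by_contra hbne
    have hab : a * b ≠ 0 := mul_ne_zero ha hbne
    have hPbd := (hC.mem_L _ _).mp hmem hab P
    rw [hDWdef, Finsupp.sub_apply, Finsupp.single_eq_of_ne' (Ne.symm hP),
      Finsupp.single_eq_same, hC.ord_mul P a b ha hbne, hordPa] at hPbd
    -- so ord P b ≥ 1
    have hmem2 : b ∈ L (Finsupp.single O ε - Finsupp.single P 1) := by
      rw [hC.mem_L]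
      intro _ Q
      have hB' := (hC.mem_L _ b).mp hb hbne Q
      rw [Finsupp.sub_apply]
      by_cases hQP : Q = P
      · subst hQP
        rw [Finsupp.single_eq_of_ne' (Ne.symm hP)] at hB' ⊢
        rw [Finsupp.single_eq_same]
        omega
      · rw [Finsupp.single_eq_of_ne' (fun h => hQP h.symm)]
        omega
    refine hbne (eq_zero_of_mem_L_neg_deg hC ?_ hmem2)
    rw [divDeg_sub, divDeg_single, divDeg_single, hO, ← hd]
    push_cast
    omega
  -- finite dimensionality
  haveI iV1 := hC.finiteDimensional_L (Finsupp.single O εp)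
  haveI iV2 := hC.finiteDimensional_L (Finsupp.single O εm)
  haveI iE := hC.finiteDimensional_L DE
  haveI iW := hC.finiteDimensional_L DW
  -- W ≤ E
  have hWE : L DW ≤ L DE := by
    intro f hf
    rw [hC.mem_L]
    intro hne Q
    have hf' := (hC.mem_L _ f).mp hf hne Q
    rw [hDWdef, Finsupp.sub_apply] at hf'
    rw [hDEdef]
    by_cases hQ : Q = O
    · subst hQ
      rw [Finsupp.single_eq_same] at hf' ⊢
      rw [Finsupp.single_eq_of_ne' hP] at hf'
      linarith
    · rw [Finsupp.single_eq_of_ne' (fun h => hQ h.symm)] at hf' ⊢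
      by_cases hQP : Q = P
      · subst hQP
        rw [Finsupp.single_eq_same] at hf'
        omega
      · rw [Finsupp.single_eq_of_ne' (fun h => hQP h.symm)] at hf'
        omega
  -- the linear map
  set W' : Submodule k (L DE) := (L DW).comap (L DE).subtype with hW'def
  have hmemE1 : ∀ x : L (Finsupp.single O εp),
      ((LinearMap.mulLeft k am).comp (L (Finsupp.single O εp)).subtype) x ∈ L DE := by
    intro x
    exact hmulE am (x : F) em εp ham x.2 h1
  have hmemE2 : ∀ x : L (Finsupp.single O εm),
      ((LinearMap.mulLeft k ap).comp (L (Finsupp.single O εm)).subtype) x ∈ L DE := by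
    intro x
    exact hmulE ap (x : F) ep εm hap x.2 h2
  set M1 : L (Finsupp.single O εp) →ₗ[k] L DE :=
    LinearMap.codRestrict (L DE) _ hmemE1 with hM1def
  set M2 : L (Finsupp.single O εm) →ₗ[k] L DE :=
    LinearMap.codRestrict (L DE) _ hmemE2 with hM2def
  set Φ : (L (Finsupp.single O εp) × L (Finsupp.single O εm)) →ₗ[k] (L DE ⧸ W') :=
    W'.mkQ ∘ₗ ((M1 ∘ₗ LinearMap.fst k _ _) - (M2 ∘ₗ LinearMap.snd k _ _)) with hΦdef
  -- dimension count
  have fV1 : εp + 1 - (t : ℤ) ≤ (Module.finrank k (L (Finsupp.single O εp)) : ℤ) := by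
    have := hC.rr_ineq (Finsupp.single O εp)
    rwa [divDeg_single, hO, Nat.cast_one, one_mul] at this
  have fV2 : εm + 1 - (t : ℤ) ≤ (Module.finrank k (L (Finsupp.single O εm)) : ℤ) := by
    have := hC.rr_ineq (Finsupp.single O εm)
    rwa [divDeg_single, hO, Nat.cast_one, one_mul] at this
  have fE : (Module.finrank k (L DE) : ℤ) = 2 * (d : ℤ) + δ - 1 + 1 - t := by
    have hdeg : divDeg k res DE = 2 * (d : ℤ) + δ - 1 := by
      rw [hDEdef, divDeg_single, hO, Nat.cast_one, one_mul]
    rw [hC.rr_eq DE (by rw [hdeg]; omega), hdeg]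
  have fW : (2 * (d : ℤ) - 1) - d + 1 - t ≤ (Module.finrank k (L DW) : ℤ) := by
    have := hC.rr_ineq DW
    rwa [hDWdef, divDeg_sub, divDeg_single, divDeg_single, hO, ← hd,
      Nat.cast_one, one_mul, mul_one] at this
  have fW'eq : Module.finrank k W' = Module.finrank k (L DW) :=
    LinearEquiv.finrank_eq (Submodule.comapSubtypeEquivOfLe hWE)
  have fQuot : Module.finrank k (L DE ⧸ W') + Module.finrank k W'
      = Module.finrank k (L DE) := Submodule.finrank_quotient_add_finrank W'
  -- Φ is not injective
  have hker : ∃ x, x ∈ LinearMap.ker Φ ∧ x ≠ 0 := by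
    by_contra hcon
    push_neg at hcon
    have hinj : Function.Injective Φ := by
      rw [← LinearMap.ker_eq_bot]
      rw [Submodule.eq_bot_iff]
      intro x hx
      by_contra hxne
      exact hxne (hcon x hx ▸ rfl)
    have hle := LinearMap.finrank_le_finrank_of_injective hinj
    rw [Module.finrank_prod] at hle
    have hle' : (Module.finrank k (L (Finsupp.single O εp)) : ℤ)
        + (Module.finrank k (L (Finsupp.single O εm)) : ℤ)
        ≤ (Module.finrank k (L DE ⧸ W') : ℤ) := by exact_mod_cast hle
    have hW'eq' : (Module.finrank k W' : ℤ) = (Module.finrank k (L DW) : ℤ) := by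
      exact_mod_cast fW'eq
    have fQuot' : (Module.finrank k (L DE ⧸ W') : ℤ) + (Module.finrank k W' : ℤ)
        = (Module.finrank k (L DE) : ℤ) := by exact_mod_cast fQuot
    omega
  obtain ⟨x, hxker, hxne⟩ := hker
  -- the kernel element
  set b1 : F := (x.1 : F) with hb1def
  set b2 : F := (x.2 : F) with hb2def
  have hmemW : am * b1 - ap * b2 ∈ L DW := by
    have : Φ x = 0 := hxker
    rw [hΦdef] at this
    simp only [LinearMap.comp_apply, LinearMap.sub_apply, LinearMap.fst_apply,
      LinearMap.snd_apply, Submodule.mkQ_apply, Submodule.Quotient.mk_eq_zero] at this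
    rw [hW'def, Submodule.mem_comap] at this
    simpa [hM1def, hM2def, LinearMap.codRestrict_apply, LinearMap.mulLeft_apply] using this
  -- both components nonzero
  have hb1ne : b1 ≠ 0 := by
    intro hb1z
    have : -(ap * b2) ∈ L DW := by
      rw [← zero_sub, ← mul_zero am, ← hb1z]; exact hmemW
    have hmem' : ap * b2 ∈ L DW := by
      have := (L DW).neg_mem this
      rwa [neg_neg] at this
    have hb2z : b2 = 0 := hvanish ap b2 εm hap0 ordP_ap x.2.2 hεm hmem'
    apply hxne
    have h1' : x.1 = 0 := Subtype.ext hb1z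
    have h2' : x.2 = 0 := Subtype.ext hb2z
    exact Prod.ext h1' h2'
  have hb2ne : b2 ≠ 0 := by
    intro hb2z
    have hmem' : am * b1 ∈ L DW := by
      have : am * b1 - ap * 0 ∈ L DW := by rw [← hb2z]; exact hmemW
      rwa [mul_zero, sub_zero] at this
    have hb1z : b1 = 0 := hvanish am b1 εp ham0 ordP_am x.1.2 hεp hmem'
    exact hb1ne hb1z
  -- construct g
  set h : F := am * b1 - ap * b2 with hhdef
  by_cases hh0 : h = 0
  · refine ⟨b1, b2, 0, hb1ne, hb2ne, x.1.2, x.2.2, (L _).zero_mem, ?_⟩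
    rw [mul_zero, ← hhdef, hh0]
  · set g : F := h / fP with hgdef
    have hgne : g ≠ 0 := div_ne_zero hh0 hfP0
    have hfg : fP * g = h := by
      rw [hgdef, mul_comm, div_mul_cancel₀ h hfP0]
    have hordg : ∀ Q, ord Q g = ord Q h - ord Q fP := by
      intro Q
      have := hC.ord_mul Q fP g hfP0 hgne
      rw [hfg] at this
      omega
    refine ⟨b1, b2, g, hb1ne, hb2ne, x.1.2, x.2.2, ?_, by rw [hfg]⟩
    rw [hC.mem_L]
    intro _ Q
    have hW := (hC.mem_L _ h).mp hmemW hh0 Q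
    rw [hDWdef, Finsupp.sub_apply] at hW
    rw [Finsupp.sub_apply, hordg Q, hfP Q, Finsupp.sub_apply, Finsupp.sub_apply,
      Finsupp.smul_apply, smul_eq_mul]
    by_cases hQO : Q = O
    · subst hQO
      simp only [Finsupp.single_eq_same, Finsupp.single_eq_of_ne' hP, mul_one] at hW ⊢
      linarith
    · have hOQ : O ≠ Q := fun hcon => hQO hcon.symm
      by_cases hQP : Q = P
      · subst hQP
        simp only [Finsupp.single_eq_same, Finsupp.single_eq_of_ne' hOQ,
          mul_zero] at hW ⊢
        linarith
      · have hPQ : P ≠ Q := fun hcon => hQP hcon.symm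
        simp only [Finsupp.single_eq_of_ne' hOQ, Finsupp.single_eq_of_ne' hPQ,
          mul_zero] at hW ⊢
        linarith

end
end

section
/- Let C be a regular, irreducible curve that is projective over a field k, with function field F = k(C), arithmetic genus t ≥ 1, and a k-rational point O, and let S = { P in C : RR_{3t}((P)) ≠ {0} }. Assume the closed point P does not lie in S and d = deg(P) ≥ 2t + 1. Let e = ⌈(d+1)/2⌉ + t − 1, and let ε be an integer with e + 1 ≤ ε ≤ 3t. If a^+ and a^− are nonzero elements of RR_ε, then there exist nonzero b^+, b^− in RR_{ε−1} and g in RR_{3t}(D_P) such that a^− b^+ − a^+ b^− − f_P g = 0; in particular, {f_P, a^+} − {f_P, a^−} ≡ {f_P, b^+} − {f_P, b^−} modulo L_{3t} in K₂(F). -/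
open scoped TensorProduct

noncomputable section

/-- `L_d`: the subgroup of `K₂(F)` generated by the symbols `{l, m}` with `l, m`
nonzero elements of the Riemann-Roch space `H⁰(C, O_C(d(O)))`. -/
def Lsub {k F : Type*} [Field k] [Field F] [Algebra k F] {Pt : Type*}
    (L : (Pt →₀ ℤ) → Submodule k F) (O : Pt) (d : ℤ) : AddSubgroup (K2 F) :=
  AddSubgroup.closure
    { x | ∃ l m : Fˣ, (l : F) ∈ L (Finsupp.single O d) ∧
        (m : F) ∈ L (Finsupp.single O d) ∧ x = symbol l m }

section SymbolHelpers

variable {F : Type*} [Field F]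

lemma symbol_mul_right (f g h : Fˣ) : symbol f (g * h) = symbol f g + symbol f h := by
  rw [symbol, symbol, symbol, ← Submodule.Quotient.mk_add]
  congr 1
  rw [show Additive.ofMul (g * h) = Additive.ofMul g + Additive.ofMul h from rfl,
    TensorProduct.tmul_add]

lemma symbol_mul_left (f g h : Fˣ) : symbol (f * g) h = symbol f h + symbol g h := by
  rw [symbol, symbol, symbol, ← Submodule.Quotient.mk_add]
  congr 1
  rw [show Additive.ofMul (f * g) = Additive.ofMul f + Additive.ofMul g from rfl,
    TensorProduct.add_tmul]

lemma symbol_inv_right (f g : Fˣ) : symbol f g⁻¹ = - symbol f g := by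
  rw [symbol, symbol, ← Submodule.Quotient.mk_neg]
  congr 1
  rw [show Additive.ofMul g⁻¹ = - Additive.ofMul g from rfl, TensorProduct.tmul_neg]

lemma symbol_inv_left (f g : Fˣ) : symbol f⁻¹ g = - symbol f g := by
  rw [symbol, symbol, ← Submodule.Quotient.mk_neg,
    show Additive.ofMul f⁻¹ = - Additive.ofMul f from rfl, TensorProduct.neg_tmul]

lemma symbol_one_right (f : Fˣ) : symbol f (1 : Fˣ) = 0 := by
  rw [symbol, show Additive.ofMul (1 : Fˣ) = 0 from rfl, TensorProduct.tmul_zero,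
    Submodule.Quotient.mk_eq_zero]
  exact Submodule.zero_mem _

lemma symbol_steinberg (a b : Fˣ) (h : (a : F) + (b : F) = 1) : symbol a b = 0 := by
  rw [symbol, Submodule.Quotient.mk_eq_zero]
  exact Submodule.subset_span ⟨a, b, h, rfl⟩

end SymbolHelpers

/-- Lemma `flemma`.  Let `C` be a regular, irreducible curve,
projective over `k`, with function field `F`, arithmetic genus `t ≥ 1` and a
`k`-rational point `O`; let `S = {P : RR_{3t}((P)) ≠ 0}`.  Assume `P ∉ S`,
`d = deg(P) ≥ 2t + 1`, let `e = ⌈(d+1)/2⌉ + t - 1`, and let `e + 1 ≤ ε ≤ 3t`.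
If `a⁺, a⁻` are nonzero elements of `RR_ε`, then there are nonzero `b⁺, b⁻` in
`RR_{ε-1}` and `g ∈ RR_{3t}(D_P)` with `a⁻ b⁺ - a⁺ b⁻ - f_P g = 0`; in particular
`{f_P, a⁺} - {f_P, a⁻} ≡ {f_P, b⁺} - {f_P, b⁻}` modulo `L_{3t}`. -/
theorem statement16 (k F : Type*) [Field k] [Field F] [Algebra k F]
    {Pt : Type*} (res : Pt → Type*) [∀ P, Field (res P)] [∀ P, Algebra k (res P)]
    (ord : Pt → F → ℤ) (ev : ∀ P, F → res P)
    (L : (Pt →₀ ℤ) → Submodule k F) (t : ℕ) (ht : 1 ≤ t)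
    (hC : IsProjCurve k F res ord ev L t)
    (O : Pt) (hO : Module.finrank k (res O) = 1)
    (P : Pt)
    (hPS : L (Finsupp.single O (3 * t : ℤ) - Finsupp.single P 1) = ⊥)
    (d : ℕ) (hd : d = Module.finrank k (res P)) (hd1 : 2 * t + 1 ≤ d)
    (fP : Fˣ) (DP : Pt →₀ ℤ)
    (hDPeff : ∀ Q, 0 ≤ DP Q) (hDPdeg : divDeg k res DP = t)
    (hfP : ∀ Q, ord Q (fP : F) =
      ((Finsupp.single P 1 - DP - ((d : ℤ) - t) • Finsupp.single O 1 : Pt →₀ ℤ)) Q)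
    (e : ℤ) (he : e = ⌈((d : ℚ) + 1) / 2⌉ + t - 1)
    (ε : ℤ) (hε1 : e + 1 ≤ ε) (hε2 : ε ≤ 3 * t)
    (ap am : Fˣ)
    (hap : (ap : F) ∈ L (Finsupp.single O ε))
    (ham : (am : F) ∈ L (Finsupp.single O ε)) :
    ∃ bp bm : Fˣ,
      (bp : F) ∈ L (Finsupp.single O (ε - 1)) ∧
      (bm : F) ∈ L (Finsupp.single O (ε - 1)) ∧
      ∃ g ∈ L (Finsupp.single O (3 * t : ℤ) - DP),
        (am : F) * bp - (ap : F) * bm - (fP : F) * g = 0 ∧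
        symbol fP ap - symbol fP am - (symbol fP bp - symbol fP bm) ∈
          Lsub L O (3 * t : ℤ) := by
  classical
  have htZ : (1 : ℤ) ≤ t := by exact_mod_cast ht
  have hdZ : (2 * t + 1 : ℤ) ≤ d := by exact_mod_cast hd1
  -- 2ε ≥ d + 2t + 1
  have h2e : (d : ℤ) + 2 * t + 1 ≤ 2 * ε := by
    have h1 : ((d : ℚ) + 1) / 2 ≤ (⌈((d : ℚ) + 1) / 2⌉ : ℚ) := Int.le_ceil _
    have h2 : (d : ℤ) + 1 ≤ 2 * ⌈((d : ℚ) + 1) / 2⌉ := by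
      have : ((d : ℚ) + 1) ≤ 2 * (⌈((d : ℚ) + 1) / 2⌉ : ℚ) := by linarith
      exact_mod_cast this
    omega
  have hεlb : 2 * (t : ℤ) + 1 ≤ ε := by omega
  have hPO : P ≠ O := by
    intro h
    rw [h, hO] at hd
    omega
  -- degree computations
  have hfin : ∀ D : Pt →₀ ℤ,
      (Function.support fun Q => (Module.finrank k (res Q) : ℤ) * D Q).Finite := by
    intro D
    apply Set.Finite.subset D.finite_support
    intro Q hQ
    simp only [Function.mem_support] at hQ ⊢
    intro h0
    exact hQ (by rw [h0, mul_zero])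
  have hdeg_single : ∀ n : ℤ, divDeg k res (Finsupp.single O n) = n := by
    intro n
    rw [divDeg, finsum_eq_single _ O
      (fun x hx => by rw [Finsupp.single_eq_of_ne' (Ne.symm hx), mul_zero])]
    rw [Finsupp.single_eq_same, hO]
    ring
  have hdeg_sub : ∀ D1 D2 : Pt →₀ ℤ,
      divDeg k res (D1 - D2) = divDeg k res D1 - divDeg k res D2 := by
    intro D1 D2
    rw [divDeg, divDeg, divDeg, ← finsum_sub_distrib (hfin D1) (hfin D2)]
    congr 1
    funext Q
    rw [Finsupp.sub_apply]
    ring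
  -- DP vanishes at P
  have hDPP : DP P = 0 := by
    have hnn : ∀ Q, 0 ≤ (Module.finrank k (res Q) : ℤ) * DP Q := fun Q =>
      mul_nonneg (by positivity) (hDPeff Q)
    have hle := single_le_finsum P (hfin DP) hnn
    have hdd : (∑ᶠ Q, (Module.finrank k (res Q) : ℤ) * DP Q) = (t : ℤ) := hDPdeg
    rw [hdd, ← hd] at hle
    by_contra hne
    have h1 : 1 ≤ DP P := lt_of_le_of_ne (hDPeff P) (Ne.symm hne)
    have h2 : (d : ℤ) ≤ (d : ℤ) * DP P := le_mul_of_one_le_right (by omega) h1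
    linarith
  -- monotonicity of Riemann-Roch spaces
  have hmono : ∀ D1 D2 : Pt →₀ ℤ, (∀ Q, D1 Q ≤ D2 Q) → L D1 ≤ L D2 := by
    intro D1 D2 h12 x hx
    rw [hC.mem_L] at hx ⊢
    intro hx0 Q
    have := hx hx0 Q
    have := h12 Q
    omega
  have hsle : ∀ a b : ℤ, a ≤ b → ∀ Q, (Finsupp.single O a) Q ≤ (Finsupp.single O b) Q := by
    intro a b hab Q
    rw [Finsupp.single_apply, Finsupp.single_apply]
    split_ifs <;> omega
  have hapL3 : (ap : F) ∈ L (Finsupp.single O (3 * t : ℤ)) :=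
    hmono _ _ (hsle ε _ hε2) hap
  have hamL3 : (am : F) ∈ L (Finsupp.single O (3 * t : ℤ)) :=
    hmono _ _ (hsle ε _ hε2) ham
  have hAL3 : ∀ x : F, x ∈ L (Finsupp.single O (ε - 1)) →
      x ∈ L (Finsupp.single O (3 * t : ℤ)) := fun x hx =>
    hmono _ _ (hsle (ε - 1) _ (by omega)) hx
  have hGL3 : ∀ x : F, x ∈ L (Finsupp.single O (3 * t : ℤ) - DP) →
      x ∈ L (Finsupp.single O (3 * t : ℤ)) := fun x hx =>
    hmono _ _ (fun Q => by rw [Finsupp.sub_apply]; have := hDPeff Q; omega) hx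
  -- order at P of nonzero elements of L(3t O) is 0
  have hordP0 : ∀ x : F, x ≠ 0 → x ∈ L (Finsupp.single O (3 * t : ℤ)) → ord P x = 0 := by
    intro x hx0 hx
    have h1 := (hC.mem_L _ x).1 hx hx0 P
    rw [Finsupp.single_eq_of_ne' (Ne.symm hPO)] at h1
    by_contra h
    have h2 : 1 ≤ ord P x := by omega
    have hmem : x ∈ L (Finsupp.single O (3 * t : ℤ) - Finsupp.single P 1) := by
      rw [hC.mem_L]
      intro _ Q
      rw [Finsupp.sub_apply]
      by_cases hQ : Q = P
      · subst hQ
        rw [Finsupp.single_eq_of_ne' (Ne.symm hPO), Finsupp.single_eq_same]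
        omega
      · rw [Finsupp.single_eq_of_ne' (Ne.symm hQ)]
        have := (hC.mem_L _ x).1 hx hx0 Q
        omega
    rw [hPS] at hmem
    exact hx0 (by simpa using hmem)
  have hord_neg : ∀ (Q : Pt) (x : F), x ≠ 0 → ord Q (-x) = ord Q x := by
    intro Q x hx
    have hm1 : algebraMap k F (-1) = -1 := by rw [map_neg, map_one]
    have hne : algebraMap k F (-1) ≠ 0 := by
      rw [hm1]; exact neg_ne_zero.2 one_ne_zero
    have hrw : (-x) = algebraMap k F (-1) * x := by rw [hm1]; ring
    rw [hrw, hC.ord_mul Q _ x hne hx,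
      hC.ord_algebraMap Q (-1) (neg_ne_zero.2 one_ne_zero)]
    ring
  -- multiplication maps into Riemann-Roch spaces
  have hmul : ∀ (a x : F) (n m : ℤ), a ∈ L (Finsupp.single O n) →
      x ∈ L (Finsupp.single O m) → a * x ∈ L (Finsupp.single O (n + m)) := by
    intro a x n m ha hx
    rw [hC.mem_L]
    intro h0 Q
    have ha0 : a ≠ 0 := fun h => h0 (by rw [h, zero_mul])
    have hx0 : x ≠ 0 := fun h => h0 (by rw [h, mul_zero])
    rw [hC.ord_mul Q a x ha0 hx0]
    have h1 := (hC.mem_L _ a).1 ha ha0 Q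
    have h2 := (hC.mem_L _ x).1 hx hx0 Q
    rw [Finsupp.single_apply] at h1 h2 ⊢
    split_ifs at h1 h2 ⊢ <;> omega
  have hfPmul : ∀ g : F, g ∈ L (Finsupp.single O (3 * t : ℤ) - DP) →
      (fP : F) * g ∈ L (Finsupp.single O (2 * ε - 1)) := by
    intro g hg
    rw [hC.mem_L]
    intro h0 Q
    have hg0 : g ≠ 0 := fun h => h0 (by rw [h, mul_zero])
    rw [hC.ord_mul Q _ g fP.ne_zero hg0, hfP Q]
    have h2 := (hC.mem_L _ g).1 hg hg0 Q
    simp only [Finsupp.sub_apply, Finsupp.smul_apply, smul_eq_mul,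
      Finsupp.single_apply] at h2 ⊢
    split_ifs at h2 ⊢ <;> omega
  -- dimension counts
  haveI hFA : FiniteDimensional k (L (Finsupp.single O (ε - 1))) := hC.finiteDimensional_L _
  haveI hFG : FiniteDimensional k (L (Finsupp.single O (3 * t : ℤ) - DP)) :=
    hC.finiteDimensional_L _
  haveI hFW : FiniteDimensional k (L (Finsupp.single O (2 * ε - 1))) :=
    hC.finiteDimensional_L _
  have hrkA : (Module.finrank k (L (Finsupp.single O (ε - 1))) : ℤ) = ε - t := by
    rw [hC.rr_eq _ (by rw [hdeg_single]; omega), hdeg_single]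
    ring
  have hrkW : (Module.finrank k (L (Finsupp.single O (2 * ε - 1))) : ℤ) = 2 * ε - t := by
    rw [hC.rr_eq _ (by rw [hdeg_single]; omega), hdeg_single]
    ring
  have hrkG : (Module.finrank k (L (Finsupp.single O (3 * t : ℤ) - DP)) : ℤ) = t + 1 := by
    have hdd : divDeg k res (Finsupp.single O (3 * t : ℤ) - DP) = 2 * t := by
      rw [hdeg_sub, hdeg_single, hDPdeg]
      ring
    rw [hC.rr_eq _ (by rw [hdd]; omega), hdd]
    ring
  -- the linear map
  set A := L (Finsupp.single O (ε - 1)) with hAdef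
  set G := L (Finsupp.single O (3 * t : ℤ) - DP) with hGdef
  set W := L (Finsupp.single O (2 * ε - 1)) with hWdef
  let φ₀ : (A × A × G) →ₗ[k] F :=
    { toFun := fun x => (am : F) * x.1 - (ap : F) * x.2.1 - (fP : F) * x.2.2
      map_add' := by
        intro x y
        simp only [Prod.fst_add, Prod.snd_add, Submodule.coe_add]
        ring
      map_smul' := by
        intro c x
        simp only [Prod.smul_fst, Prod.smul_snd, SetLike.val_smul, smul_sub,
          Algebra.smul_def, RingHom.id_apply]
        ring }
  have hφmem : ∀ x : A × A × G, φ₀ x ∈ W := by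
    intro x
    refine Submodule.sub_mem _ (Submodule.sub_mem _ ?_ ?_) (hfPmul _ x.2.2.2)
    · have := hmul (am : F) (x.1 : F) ε (ε - 1) ham x.1.2
      rwa [show ε + (ε - 1) = 2 * ε - 1 by ring] at this
    · have := hmul (ap : F) (x.2.1 : F) ε (ε - 1) hap x.2.1.2
      rwa [show ε + (ε - 1) = 2 * ε - 1 by ring] at this
  let φ : (A × A × G) →ₗ[k] W := LinearMap.codRestrict W φ₀ hφmem
  have hker : LinearMap.ker φ ≠ ⊥ := by
    intro hbot
    have hinj : Function.Injective φ := LinearMap.ker_eq_bot.1 hbot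
    have hle := LinearMap.finrank_le_finrank_of_injective hinj
    rw [Module.finrank_prod, Module.finrank_prod] at hle
    have hle' : ((Module.finrank k A : ℤ)) + ((Module.finrank k A : ℤ) +
        (Module.finrank k G : ℤ)) ≤ (Module.finrank k W : ℤ) := by exact_mod_cast hle
    rw [hrkA, hrkG, hrkW] at hle'
    omega
  obtain ⟨x, hxker, hxne⟩ := (Submodule.ne_bot_iff _).1 hker
  have hxeq : (am : F) * x.1 - (ap : F) * x.2.1 - (fP : F) * x.2.2 = 0 := by
    have h := congrArg (Subtype.val) (LinearMap.mem_ker.1 hxker)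
    simpa [φ, LinearMap.codRestrict_apply, φ₀] using h
  obtain ⟨⟨b1, hb1A⟩, ⟨b2, hb2A⟩, ⟨g0, hg0G⟩⟩ := x
  simp only at hxeq
  have hxne' : ¬ (b1 = 0 ∧ b2 = 0 ∧ g0 = 0) := by
    rintro ⟨e1, e2, e3⟩
    exact hxne (Prod.ext_iff.2 ⟨Subtype.ext e1, Prod.ext_iff.2 ⟨Subtype.ext e2, Subtype.ext e3⟩⟩)
  -- order of fP g at P is positive
  have hg0P : ∀ g : F, g ≠ 0 → g ∈ G → 1 ≤ ord P ((fP : F) * g) := by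
    intro g hg hgG
    rw [hC.ord_mul P _ _ fP.ne_zero hg, hfP P]
    have h2 := (hC.mem_L _ g).1 hgG hg P
    rw [Finsupp.sub_apply, Finsupp.single_eq_of_ne' (Ne.symm hPO), hDPP] at h2
    simp only [Finsupp.sub_apply, Finsupp.smul_apply, smul_eq_mul,
      Finsupp.single_eq_same, Finsupp.single_eq_of_ne' (Ne.symm hPO), hDPP, mul_zero]
    omega
  -- b1 and b2 are nonzero
  have hbb : b1 ≠ 0 ∧ b2 ≠ 0 := by
    by_cases h1 : b1 = 0 <;> by_cases h2 : b2 = 0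
    · exfalso
      apply hxne'
      refine ⟨h1, h2, ?_⟩
      rw [h1, h2] at hxeq
      have hg : (fP : F) * g0 = 0 := by linear_combination -hxeq
      rcases mul_eq_zero.1 hg with h | h
      · exact absurd h fP.ne_zero
      · exact h
    · exfalso
      have heq2 : (ap : F) * b2 = -((fP : F) * g0) := by
        rw [h1] at hxeq
        linear_combination -hxeq
      have hg0 : g0 ≠ 0 := by
        intro h
        rw [h, mul_zero, neg_zero, mul_eq_zero] at heq2
        rcases heq2 with h' | h'
        exacts [ap.ne_zero h', h2 h']
      have hordL : ord P ((ap : F) * b2) = 0 := by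
        rw [hC.ord_mul P _ _ ap.ne_zero h2, hordP0 _ ap.ne_zero hapL3,
          hordP0 b2 h2 (hAL3 _ hb2A)]
        norm_num
      rw [heq2, hord_neg P _ (mul_ne_zero fP.ne_zero hg0)] at hordL
      have := hg0P g0 hg0 hg0G
      omega
    · exfalso
      have heq2 : (am : F) * b1 = (fP : F) * g0 := by
        rw [h2] at hxeq
        linear_combination hxeq
      have hg0 : g0 ≠ 0 := by
        intro h
        rw [h, mul_zero, mul_eq_zero] at heq2
        rcases heq2 with h' | h'
        exacts [am.ne_zero h', h1 h']
      have hordL : ord P ((am : F) * b1) = 0 := by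
        rw [hC.ord_mul P _ _ am.ne_zero h1, hordP0 _ am.ne_zero hamL3,
          hordP0 b1 h1 (hAL3 _ hb1A)]
        norm_num
      rw [heq2] at hordL
      have := hg0P g0 hg0 hg0G
      omega
    · exact ⟨h1, h2⟩
  obtain ⟨hb1, hb2⟩ := hbb
  set bpU : Fˣ := Units.mk0 b1 hb1 with hbpU
  set bmU : Fˣ := Units.mk0 b2 hb2 with hbmU
  refine ⟨bpU, bmU, hb1A, hb2A, g0, hg0G, hxeq, ?_⟩
  -- the symbol computation
  set u : Fˣ := ap * bmU * (am * bpU)⁻¹ with hu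
  have hT : symbol fP ap - symbol fP am - (symbol fP bpU - symbol fP bmU)
      = symbol fP u := by
    rw [hu, symbol_mul_right, symbol_mul_right, symbol_inv_right, symbol_mul_right]
    abel
  rw [hT]
  have hgen : ∀ yl ym : Fˣ, (yl : F) ∈ L (Finsupp.single O (3 * t : ℤ)) →
      (ym : F) ∈ L (Finsupp.single O (3 * t : ℤ)) →
      symbol yl ym ∈ Lsub L O (3 * t : ℤ) := fun yl ym h1 h2 =>
    AddSubgroup.subset_closure ⟨yl, ym, h1, h2, rfl⟩
  have hsymu : ∀ y : Fˣ, (y : F) ∈ L (Finsupp.single O (3 * t : ℤ)) →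
      symbol y u ∈ Lsub L O (3 * t : ℤ) := by
    intro y hy
    rw [hu, symbol_mul_right, symbol_mul_right, symbol_inv_right, symbol_mul_right]
    exact AddSubgroup.add_mem _
      (AddSubgroup.add_mem _ (hgen y ap hy hapL3) (hgen y bmU hy (hAL3 _ hb2A)))
      (AddSubgroup.neg_mem _
        (AddSubgroup.add_mem _ (hgen y am hy hamL3) (hgen y bpU hy (hAL3 _ hb1A))))
  have hne : (am : F) * b1 ≠ 0 := mul_ne_zero am.ne_zero hb1
  have hval_u : (u : F) = (ap : F) * b2 * ((am : F) * b1)⁻¹ := by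
    rw [hu]
    push_cast
    rfl
  by_cases hg : g0 = 0
  · have hu1 : u = 1 := by
      apply Units.ext
      have heq2 : (am : F) * b1 = (ap : F) * b2 := by
        rw [hg] at hxeq
        linear_combination hxeq
      rw [Units.val_one, hval_u, ← heq2, mul_inv_cancel₀ hne]
    rw [hu1, symbol_one_right]
    exact AddSubgroup.zero_mem _
  · set gU : Fˣ := Units.mk0 g0 hg with hgU
    set v : Fˣ := fP * gU * (am * bpU)⁻¹ with hv
    have hval_v : (v : F) = (fP : F) * g0 * ((am : F) * b1)⁻¹ := by
      rw [hv]
      push_cast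
      rfl
    have hvu : (v : F) + (u : F) = 1 := by
      rw [hval_u, hval_v]
      field_simp
      linear_combination -hxeq
    have hsv : symbol v u = 0 := symbol_steinberg v u hvu
    have hexp : symbol v u = symbol fP u + symbol gU u - (symbol am u + symbol bpU u) := by
      rw [hv, symbol_mul_left, symbol_mul_left, symbol_inv_left, symbol_mul_left]
      abel
    have hfPu : symbol fP u = symbol am u + symbol bpU u - symbol gU u := by
      rw [← sub_eq_zero,
        show symbol fP u - (symbol am u + symbol bpU u - symbol gU u)
            = symbol fP u + symbol gU u - (symbol am u + symbol bpU u) by abel,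
        ← hexp]
      exact hsv
    rw [hfPu]
    exact AddSubgroup.sub_mem _
      (AddSubgroup.add_mem _ (hsymu am hamL3) (hsymu bpU (hAL3 _ hb1A)))
      (hsymu gU (hGL3 _ hg0G))

end
end
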